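/- Fix a real α > 1 and an integer m ≥ 1. Suppose all jobs have a common deadline d (d_j = d for every job j), with arbitrary release dates r_j < d. Then for every feasible preemptive schedule S_pr on m processors there exists a feasible non-preemptive schedule S_npr on m processors with E(S_npr) ≤ (2 − 1/m)^(α−1) · E(S_pr). In particular this yields a (2 − 1/m)^(α−1)-approximation for the problem S|r_j, d_j=d|E. -/

import Mathlib

open MeasureTheory Set

namespace CDAux

noncomputable def pick {m : ℕ} (hm : 0 < m) (f : Fin m → ℝ) : Fin m :=
  (Finset.exists_max_image Finset.univ f ⟨⟨0, hm⟩, Finset.mem_univ _⟩).choose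

lemma pick_spec {m : ℕ} (hm : 0 < m) (f : Fin m → ℝ) (i : Fin m) : f i ≤ f (pick hm f) := by
  obtain ⟨-, h⟩ := (Finset.exists_max_image Finset.univ f ⟨⟨0, hm⟩, Finset.mem_univ _⟩).choose_spec
  exact h i (Finset.mem_univ i)

noncomputable def fronts {m : ℕ} (hm : 0 < m) (D : ℝ) (L : ℕ → ℝ) : ℕ → Fin m → ℝ
  | 0 => fun _ => D
  | k + 1 =>
      Function.update (fronts hm D L k) (pick hm (fronts hm D L k))
        (fronts hm D L k (pick hm (fronts hm D L k)) - L k)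

variable {m : ℕ} (hm : 0 < m) (D : ℝ) (L : ℕ → ℝ)

lemma fronts_succ_le (hL : ∀ k, 0 ≤ L k) (k : ℕ) (i : Fin m) :
    fronts hm D L (k+1) i ≤ fronts hm D L k i := by
  simp only [fronts]
  rcases eq_or_ne i (pick hm (fronts hm D L k)) with h | h
  · subst h; rw [Function.update_self]; linarith [hL k]
  · rw [Function.update_of_ne h]

lemma fronts_mono (hL : ∀ k, 0 ≤ L k) {k k' : ℕ} (h : k ≤ k') (i : Fin m) :
    fronts hm D L k' i ≤ fronts hm D L k i := by
  induction k' , h using Nat.le_induction with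
  | base => exact le_refl _
  | succ k' hk ih => exact (fronts_succ_le hm D L hL k' i).trans ih

lemma fronts_le_D (hL : ∀ k, 0 ≤ L k) (k : ℕ) (i : Fin m) : fronts hm D L k i ≤ D :=
  fronts_mono hm D L hL (Nat.zero_le k) i

lemma sum_fronts (k : ℕ) :
    ∑ i : Fin m, (D - fronts hm D L k i) = ∑ k' ∈ Finset.range k, L k' := by
  induction k with
  | zero => simp [fronts]
  | succ k ih =>
    rw [Finset.sum_range_succ, ← ih]
    have : ∀ i : Fin m, D - fronts hm D L (k+1) i
        = (D - fronts hm D L k i) + (if i = pick hm (fronts hm D L k) then L k else 0) := by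
      intro i
      simp only [fronts]
      rcases eq_or_ne i (pick hm (fronts hm D L k)) with h | h
      · subst h; rw [Function.update_self, if_pos rfl]; ring
      · rw [Function.update_of_ne h, if_neg h]; ring
    rw [Finset.sum_congr rfl fun i _ => this i, Finset.sum_add_distrib,
      Finset.sum_ite_eq' Finset.univ _ (fun _ => L k), if_pos (Finset.mem_univ _)]

lemma maxfront (k : ℕ) :
    (m : ℝ) * (D - fronts hm D L k (pick hm (fronts hm D L k))) ≤ ∑ k' ∈ Finset.range k, L k' := by
  rw [← sum_fronts hm D L k]
  calc (m : ℝ) * (D - fronts hm D L k (pick hm (fronts hm D L k)))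
      = ∑ _i : Fin m, (D - fronts hm D L k (pick hm (fronts hm D L k))) := by
        simp [Finset.sum_const, Finset.card_univ, mul_comm]; ring
    _ ≤ ∑ i : Fin m, (D - fronts hm D L k i) :=
        Finset.sum_le_sum fun i _ => by linarith [pick_spec hm (fronts hm D L k) i]

lemma vol_sum_le {a D : ℝ} (haD : a ≤ D) {κ : Type*} (s : Finset κ) (B : κ → Set ℝ)
    (hmeas : ∀ k ∈ s, MeasurableSet (B k)) (hsub : ∀ k ∈ s, B k ⊆ Icc a D)
    (hdisj : (s : Set κ).PairwiseDisjoint B) :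
    ∑ k ∈ s, (volume (B k)).toReal ≤ D - a := by
  have hIcc : volume (Icc a D) = ENNReal.ofReal (D - a) := Real.volume_Icc
  have hle : ∀ k ∈ s, volume (B k) ≤ ENNReal.ofReal (D - a) := fun k hk =>
    hIcc ▸ measure_mono (hsub k hk)
  have hfin : ∀ k ∈ s, volume (B k) ≠ ⊤ := fun k hk =>
    ne_top_of_le_ne_top ENNReal.ofReal_ne_top (hle k hk)
  have hsumle : ∑ k ∈ s, volume (B k) ≤ ENNReal.ofReal (D - a) := by
    rw [← measure_biUnion_finset hdisj fun k hk => hmeas k hk]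
    exact hIcc ▸ measure_mono (Set.iUnion₂_subset hsub)
  calc ∑ k ∈ s, (volume (B k)).toReal = (∑ k ∈ s, volume (B k)).toReal :=
        (ENNReal.toReal_sum hfin).symm
    _ ≤ (ENNReal.ofReal (D - a)).toReal := ENNReal.toReal_mono ENNReal.ofReal_ne_top hsumle
    _ = D - a := ENNReal.toReal_ofReal (by linarith)

lemma Ioo_disj {a b c d : ℝ} (h : d ≤ a) : Disjoint (Set.Ioo a b) (Set.Ioo c d) :=
  Set.disjoint_left.mpr fun x hx hx' => absurd (hx'.2.trans_le h) (not_lt.mpr hx.1.le)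

end CDAux




open MeasureTheory Set

/-- A feasible preemptive (migratory) schedule on `m` identical speed-scalable
processors, for an instance given by jobs `ι` with works `w`, release dates `r` and
deadlines `d`: each job `j` gets a constant speed `speed j > 0` and, on each processor
`i`, a measurable set `A i j ⊆ [r j, d j]` of execution times; distinct jobs are
disjoint on each processor, a job never runs on two processors simultaneously, and the
total execution time times the speed equals the work. -/
structure PreemptiveSchedule (ι : Type) [Fintype ι] (m : ℕ) (w r d : ι → ℝ) where
  speed : ι → ℝ
  A : Fin m → ι → Set ℝ
  speed_pos : ∀ j, 0 < speed j
  measurableSet_A : ∀ i j, MeasurableSet (A i j)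
  A_subset : ∀ i j, A i j ⊆ Icc (r j) (d j)
  disjoint_jobs : ∀ i, ∀ j j', j ≠ j' → Disjoint (A i j) (A i j')
  disjoint_procs : ∀ j, ∀ i i', i ≠ i' → Disjoint (A i j) (A i' j)
  work_done : ∀ j, speed j * ∑ i, (volume (A i j)).toReal = w j

/-- The energy consumption of a preemptive schedule: each job `j` of work `w j` run at
constant speed `s_j` consumes energy `w j * s_j ^ (α - 1)`. -/
noncomputable def pEnergy {ι : Type} [Fintype ι] {m : ℕ} {w r d : ι → ℝ}
    (α : ℝ) (S : PreemptiveSchedule ι m w r d) : ℝ :=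
  ∑ j, w j * S.speed j ^ (α - 1)

/-- A feasible non-preemptive schedule on `m` identical speed-scalable processors:
each job `j` is assigned a processor `proc j`, a start time `start j ≥ r j` and a
processing time `len j > 0` with `start j + len j ≤ d j`, and the open execution
intervals of distinct jobs on the same processor are pairwise disjoint. -/
structure NPSchedule (ι : Type) [Fintype ι] (m : ℕ) (w r d : ι → ℝ) where
  proc : ι → Fin m
  start : ι → ℝ
  len : ι → ℝ
  len_pos : ∀ j, 0 < len j
  start_ge : ∀ j, r j ≤ start j
  end_le : ∀ j, start j + len j ≤ d j
  disjoint_jobs : ∀ j j', j ≠ j' → proc j = proc j' →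
    Disjoint (Set.Ioo (start j) (start j + len j)) (Set.Ioo (start j') (start j' + len j'))

/-- The energy consumption of a non-preemptive schedule: job `j` runs at constant speed
`w j / len j` and consumes energy `w j * (w j / len j) ^ (α - 1)`. -/
noncomputable def npEnergy {ι : Type} [Fintype ι] {m : ℕ} {w r d : ι → ℝ}
    (α : ℝ) (S : NPSchedule ι m w r d) : ℝ :=
  ∑ j, w j * (w j / S.len j) ^ (α - 1)

/-- Theorem 2 (common deadline): for `α > 1` and `m ≥ 1` processors, if all jobs have
the same deadline `D` (and arbitrary release dates `0 ≤ r j < D`), then for every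
feasible preemptive schedule there exists a feasible non-preemptive schedule whose
energy is at most `(2 - 1/m)^(α-1)` times the energy of the preemptive schedule.
This yields a `(2 - 1/m)^(α-1)`-approximation for `S|r_j, d_j=d|E`. -/

theorem common_deadline (ι : Type) [Fintype ι] (α : ℝ) (hα : 1 < α)
    (m : ℕ) (hm : 1 ≤ m) (w r : ι → ℝ) (D : ℝ)
    (hw : ∀ j, 0 < w j) (hr : ∀ j, 0 ≤ r j) (hrD : ∀ j, r j < D)
    (Spr : PreemptiveSchedule ι m w r (fun _ => D)) :
    ∃ Snpr : NPSchedule ι m w r (fun _ => D),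
      npEnergy α Snpr ≤ (2 - 1 / (m : ℝ)) ^ (α - 1) * pEnergy α Spr := by
  classical
  have hm0 : 0 < m := hm
  have hM1 : (1 : ℝ) ≤ (m : ℝ) := by exact_mod_cast hm
  have hM0 : (0 : ℝ) < (m : ℝ) := by linarith
  set c : ℝ := 2 - 1 / (m : ℝ) with hc
  have hc1 : (1 : ℝ) ≤ c := by
    have h1 : 1 / (m : ℝ) ≤ 1 := by rw [div_le_one hM0]; exact hM1
    simp only [hc]; linarith
  have hc0 : (0 : ℝ) < c := by linarith
  set T : ι → ℝ := fun j => ∑ i, (volume (Spr.A i j)).toReal with hT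
  have hs_pos := Spr.speed_pos
  have hT_eq : ∀ j, T j = w j / Spr.speed j := by
    intro j
    rw [eq_div_iff (hs_pos j).ne', mul_comm]
    exact Spr.work_done j
  have hT_pos : ∀ j, 0 < T j := by
    intro j; rw [hT_eq]; exact div_pos (hw j) (hs_pos j)
  -- single job fits in its window
  have hTj_le : ∀ j, T j ≤ D - r j := by
    intro j
    exact CDAux.vol_sum_le (hrD j).le Finset.univ (fun i => Spr.A i j)
      (fun i _ => Spr.measurableSet_A i j)
      (fun i _ => Spr.A_subset i j)
      (fun i _ i' _ hne => Spr.disjoint_procs j i i' hne)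
  -- capacity bound
  have hcap : ∀ j : ι,
      ∑ k ∈ Finset.univ.filter (fun k => r j ≤ r k), T k ≤ (m : ℝ) * (D - r j) := by
    intro j
    have h1 : ∀ i : Fin m,
        ∑ k ∈ Finset.univ.filter (fun k => r j ≤ r k), (volume (Spr.A i k)).toReal
          ≤ D - r j := by
      intro i
      refine CDAux.vol_sum_le (hrD j).le _ (fun k => Spr.A i k)
        (fun k _ => Spr.measurableSet_A i k)
        (fun k hk => (Spr.A_subset i k).trans
          (Icc_subset_Icc (Finset.mem_filter.mp hk).2 le_rfl))
        (fun k _ k' _ hne => Spr.disjoint_jobs i k k' hne)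
    calc ∑ k ∈ Finset.univ.filter (fun k => r j ≤ r k), T k
        = ∑ i : Fin m, ∑ k ∈ Finset.univ.filter (fun k => r j ≤ r k),
            (volume (Spr.A i k)).toReal := Finset.sum_comm
      _ ≤ ∑ _i : Fin m, (D - r j) := Finset.sum_le_sum fun i _ => h1 i
      _ = (m : ℝ) * (D - r j) := by
          simp [Finset.sum_const, Finset.card_univ, mul_comm]; ring
  -- sorting
  set n := Fintype.card ι with hn
  set eqv : Fin n ≃ ι := (Fintype.equivFin ι).symm with heqv
  set σ := Tuple.sort (fun k => -r (eqv k)) with hσ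
  set ord : Fin n ≃ ι := σ.trans eqv with hord_def
  have hord : ∀ k k' : Fin n, k ≤ k' → r (ord k') ≤ r (ord k) := by
    intro k k' hkk'
    have h := Tuple.monotone_sort (fun k => -r (eqv k)) hkk'
    simp only [Function.comp_apply] at h
    simp only [hord_def, Equiv.trans_apply]
    linarith
  set β : ℝ := 1 / c with hβ
  have hβ0 : (0 : ℝ) < β := by positivity
  set t : ℕ → ℝ := fun k => if h : k < n then T (ord ⟨k, h⟩) else 0 with ht
  have ht_nonneg : ∀ k, 0 ≤ t k := by
    intro k; simp only [ht]
    split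
    · exact (hT_pos _).le
    · exact le_rfl
  set L : ℕ → ℝ := fun k => β * t k with hL
  have hL0 : ∀ k, 0 ≤ L k := fun k => mul_nonneg hβ0.le (ht_nonneg k)
  set F := CDAux.fronts hm0 D L with hF
  -- prefix capacity in sorted order
  have hpre : ∀ (k : ℕ) (hk : k < n),
      ∑ k' ∈ Finset.range (k+1), t k' ≤ (m : ℝ) * (D - r (ord ⟨k, hk⟩)) := by
    intro k hk
    set kf : Fin n := ⟨k, hk⟩ with hkf
    have h1 : ∑ k' ∈ Finset.range (k+1), t k' = ∑ k' ∈ Finset.Iic kf, T (ord k') := by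
      have hr1 : Finset.range (k+1) = (Finset.Iic kf).map Fin.valEmbedding := by
        rw [Fin.map_valEmbedding_Iic]
        ext x; simp [Nat.lt_succ_iff]; exact Iff.rfl
      rw [hr1, Finset.sum_map]
      refine Finset.sum_congr rfl fun x _ => ?_
      simp only [ht, Fin.valEmbedding_apply]
      rw [dif_pos x.isLt]
    have h2 : ∑ k' ∈ Finset.Iic kf, T (ord k')
        = ∑ j ∈ (Finset.Iic kf).image ord, T j :=
      (Finset.sum_image fun a _ b _ h => ord.injective h).symm
    have h3 : (Finset.Iic kf).image ord ⊆ Finset.univ.filter (fun j => r (ord kf) ≤ r j) := by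
      intro j hj
      simp only [Finset.mem_image, Finset.mem_Iic] at hj
      obtain ⟨k', hk', rfl⟩ := hj
      simp only [Finset.mem_filter, Finset.mem_univ, true_and]
      exact hord k' kf hk'
    rw [h1, h2]
    exact le_trans
      (Finset.sum_le_sum_of_subset_of_nonneg h3 fun j _ _ => (hT_pos j).le)
      (hcap (ord kf))
  -- value of L at a job's index
  have hLval : ∀ j : ι, L ((ord.symm j : Fin n) : ℕ) = β * T j := by
    intro j
    simp only [hL, ht]
    rw [dif_pos (ord.symm j).isLt]
    congr 1
    have : (⟨((ord.symm j : Fin n) : ℕ), (ord.symm j).isLt⟩ : Fin n) = ord.symm j := by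
      apply Fin.ext; rfl
    rw [this, Equiv.apply_symm_apply]
  -- the start-time inequality
  have hstart : ∀ j : ι,
      r j ≤ F ((ord.symm j : Fin n) : ℕ)
        (CDAux.pick hm0 (F ((ord.symm j : Fin n) : ℕ))) - L ((ord.symm j : Fin n) : ℕ) := by
    intro j
    set k : ℕ := ((ord.symm j : Fin n) : ℕ) with hk
    have hkn : k < n := (ord.symm j).isLt
    have hoj : ord ⟨k, hkn⟩ = j := by
      have : (⟨k, hkn⟩ : Fin n) = ord.symm j := by apply Fin.ext; rfl
      rw [this, Equiv.apply_symm_apply]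
    have htk : t k = T j := by
      simp only [ht]; rw [dif_pos hkn, hoj]
    set X : ℝ := D - r j with hX
    have hXpos : 0 < X := by simp only [hX]; linarith [hrD j]
    have hTX : T j ≤ X := hTj_le j
    have hmax := CDAux.maxfront hm0 D L k
    have hsum : ∑ k' ∈ Finset.range k, L k' = β * ∑ k' ∈ Finset.range k, t k' := by
      simp only [hL, Finset.mul_sum]
    have hpre' := hpre k hkn
    rw [hoj] at hpre'
    rw [Finset.sum_range_succ, htk] at hpre'
    -- hpre' : ∑ k' in range k, t k' + T j ≤ m * X
    set S : ℝ := ∑ k' ∈ Finset.range k, t k' with hS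
    have hS0 : 0 ≤ S := Finset.sum_nonneg fun k' _ => ht_nonneg k'
    have hmax' : (m : ℝ) * (D - F k (CDAux.pick hm0 (F k))) ≤ β * S := by
      rw [← hsum]; exact hmax
    rw [hLval j]
    -- goal : r j ≤ F k (pick ..) - β * T j
    set p := CDAux.pick hm0 (F k) with hp
    have hβm : β * (2 * (m : ℝ) - 1) = (m : ℝ) := by
      rw [hβ, hc]
      rw [div_mul_eq_mul_div, div_eq_iff (by rw [← hc]; exact hc0.ne')]
      field_simp
      try ring
    rw [show D - r j = X from hX.symm] at hpre'
    have h1 : β * S ≤ β * ((m : ℝ) * X - T j) :=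
      mul_le_mul_of_nonneg_left (by linarith) hβ0.le
    have e1 : (m : ℝ) * (D - F k p) ≤ β * ((m : ℝ) * X - T j) := hmax'.trans h1
    have e2 : β * T j * ((m : ℝ) - 1) ≤ β * X * ((m : ℝ) - 1) :=
      mul_le_mul_of_nonneg_right (mul_le_mul_of_nonneg_left hTX hβ0.le) (by linarith)
    have e3 : β * X * (2 * (m : ℝ) - 1) = (m : ℝ) * X := by
      calc β * X * (2 * (m : ℝ) - 1) = (β * (2 * (m : ℝ) - 1)) * X := by ring
        _ = (m : ℝ) * X := by rw [hβm]
    have e4 : (m : ℝ) * X = (m : ℝ) * D - (m : ℝ) * r j := by rw [hX]; ring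
    have hm_goal : (m : ℝ) * r j ≤ (m : ℝ) * (F k p - β * T j) := by nlinarith [e1, e2, e3, e4]
    exact (mul_le_mul_iff_right₀ hM0).mp hm_goal
  -- build schedule
  refine ⟨⟨fun j => CDAux.pick hm0 (F ((ord.symm j : Fin n) : ℕ)),
      fun j => F ((ord.symm j : Fin n) : ℕ)
        (CDAux.pick hm0 (F ((ord.symm j : Fin n) : ℕ))) - L ((ord.symm j : Fin n) : ℕ),
      fun j => L ((ord.symm j : Fin n) : ℕ), ?_, ?_, ?_, ?_⟩, ?_⟩
  · intro j
    show (0:ℝ) < L ((ord.symm j : Fin n) : ℕ)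
    rw [hLval j]; exact mul_pos hβ0 (hT_pos j)
  · exact hstart
  · intro j
    show _ - _ + _ ≤ D
    have : ∀ x y : ℝ, x - y + y = x := fun x y => by ring
    rw [this]
    exact CDAux.fronts_le_D hm0 D L hL0 _ _
  · -- disjointness
    intro j j' hne hproc
    have hsub : ∀ x y : ℝ, x - y + y = x := fun x y => by ring
    rw [hsub, hsub]
    set k : Fin n := ord.symm j with hk
    set k' : Fin n := ord.symm j' with hk'
    have hkk' : k ≠ k' := fun h => hne (by
      have := congrArg ord h
      rwa [Equiv.apply_symm_apply, Equiv.apply_symm_apply] at this)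
    have main : ∀ a b : Fin n, a < b →
        CDAux.pick hm0 (F (a : ℕ)) = CDAux.pick hm0 (F (b : ℕ)) →
        Disjoint
          (Set.Ioo (F (a : ℕ) (CDAux.pick hm0 (F (a : ℕ))) - L (a : ℕ)) (F (a : ℕ) (CDAux.pick hm0 (F (a : ℕ)))))
          (Set.Ioo (F (b : ℕ) (CDAux.pick hm0 (F (b : ℕ))) - L (b : ℕ)) (F (b : ℕ) (CDAux.pick hm0 (F (b : ℕ))))) := by
      intro a b hab hp
      apply CDAux.Ioo_disj
      -- F b (pick (F b)) ≤ F a (pick (F a)) - L a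
      have h1 : F ((a : ℕ) + 1) (CDAux.pick hm0 (F (a : ℕ)))
          = F (a : ℕ) (CDAux.pick hm0 (F (a : ℕ))) - L (a : ℕ) := by
        simp only [hF, CDAux.fronts, Function.update_self]
      have h2 : F (b : ℕ) (CDAux.pick hm0 (F (b : ℕ)))
          ≤ F ((a : ℕ) + 1) (CDAux.pick hm0 (F (a : ℕ))) := by
        rw [hp]
        exact CDAux.fronts_mono hm0 D L hL0 (by exact_mod_cast hab) _
      rw [h1] at h2
      exact h2
    rcases lt_or_gt_of_ne hkk' with h | h
    · exact main k k' h hproc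
    · exact (main k' k h hproc.symm).symm
  · -- energy bound
    have hterm : ∀ j : ι,
        w j * (w j / L ((ord.symm j : Fin n) : ℕ)) ^ (α - 1)
          = c ^ (α - 1) * (w j * Spr.speed j ^ (α - 1)) := by
      intro j
      rw [hLval j]
      have hwl : w j / (β * T j) = c * Spr.speed j := by
        rw [hT_eq j, hβ]
        field_simp [(hw j).ne', (hs_pos j).ne', hc0.ne']
        try ring
      rw [hwl, Real.mul_rpow hc0.le (hs_pos j).le]
      ring
    simp only [npEnergy, pEnergy]
    rw [Finset.sum_congr rfl fun j _ => hterm j, ← Finset.mul_sum]
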